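/- Let W be a real inner product space of finite dimension 2n with n ≥ 1, let J be a skew-adjoint endomorphism of W with J∘J = -id (an orthogonal complex structure), and let Q be a self-adjoint endomorphism of W satisfying Q∘J + J∘Q = c·J for some real constant c. Then the trace of Q equals n·c. (This is the core φ-basis trace identity used in the proof of Theorem 3.2: eigenvectors e with Qe = σe give Q(Je) = (c − σ)Je, so eigenvalues pair up to sum c.) -/
import Mathlib


open RealInnerProductSpace

/-- The φ-basis trace identity used in the proof of Theorem 3.2: on a `2n`-dimensional
inner product space with orthogonal complex structure `J`, a self-adjoint operator `Q`
satisfying `QJ + JQ = c J` has trace `n c`. -/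
theorem anticommutator_trace_eq {W : Type*} [NormedAddCommGroup W] [InnerProductSpace ℝ W]
    [FiniteDimensional ℝ W] (n : ℕ) (hn : 1 ≤ n)
    (hdim : Module.finrank ℝ W = 2 * n)
    (J Q : W →ₗ[ℝ] W) (c : ℝ)
    (hJskew : ∀ Y Z : W, ⟪J Y, Z⟫ = -⟪Y, J Z⟫)
    (hJ2 : ∀ Y : W, J (J Y) = -Y)
    (hQsym : ∀ Y Z : W, ⟪Q Y, Z⟫ = ⟪Y, Q Z⟫)
    (hQJ : ∀ Y : W, Q (J Y) + J (Q Y) = c • J Y) :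
    LinearMap.trace ℝ W Q = n * c := by
  have hJJ : J ∘ₗ J = -LinearMap.id := by
    ext Y; simp [hJ2]
  have hmaps : J ∘ₗ (Q ∘ₗ J) - Q = (-c) • LinearMap.id := by
    ext Y
    have h := congrArg J (hQJ Y)
    simp only [map_add, map_smul, hJ2] at h
    simp only [LinearMap.sub_apply, LinearMap.comp_apply, LinearMap.smul_apply,
      LinearMap.id_apply]
    rw [sub_eq_add_neg]
    rw [h, smul_neg, neg_smul]
  have htr := congrArg (LinearMap.trace ℝ W) hmaps
  rw [map_sub, map_smul, LinearMap.trace_id, LinearMap.trace_comp_comm',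
    LinearMap.comp_assoc, hJJ] at htr
  have hQneg : Q ∘ₗ (-LinearMap.id) = -Q := by ext Y; simp
  rw [hQneg, map_neg, hdim] at htr
  have : -LinearMap.trace ℝ W Q - LinearMap.trace ℝ W Q = -c • ((2 * n : ℕ) : ℝ) := htr
  rw [smul_eq_mul] at this; push_cast at this ⊢
  linarith
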